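/- arXiv:1203.0950 — 2 statements merged into one kernel-verified Lean document; each statement's English description precedes it below -/
import Mathlib

section
/- Let g₁ : A → B and g₂ : B → C be continuous maps. The map sending a pair (β, γ), where β is a path in B from g₁(a) to some b and γ is a path in C from g₂(b) to c, to the concatenation (g₂ ∘ β) · γ, and the map sending a path δ from g₂(g₁(a)) to c to the pair (c_{g₁(a)}, δ), are inverse fiberwise homotopy equivalences over A × C between the composite of base change objects ({}_{g₁}B) ×_B ({}_{g₂}C) and {}_{g₂ g₁}C. -/
universe u

variable {A B Z : Type u} [TopologicalSpace A] [TopologicalSpace B] [TopologicalSpace Z]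

/-- The base change object `{}_g B → A × B`: pairs `(a, β)` with `β` a path in `B`
starting at `g a`, fibered over `A × B` by `(a, β 1)`. -/
abbrev BCOl {A B : Type u} [TopologicalSpace A] [TopologicalSpace B] (g : A → B) : Type u :=
  {x : A × C(unitInterval, B) // x.2 0 = g x.1}

/-- A free path, as a `Path` between its endpoints. -/
def toPath {B : Type u} [TopologicalSpace B] (f : C(unitInterval, B)) : Path (f 0) (f 1) :=
  ⟨f, rfl, rfl⟩

/-- The composite `({}_{g₁}B) ×_B ({}_{g₂}Z)` over the middle copy of `B`. -/
abbrev BCOcomp (g₁ : A → B) (g₂ : B → Z) : Type u :=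
  {w : BCOl g₁ × BCOl g₂ // w.2.1.1 = w.1.1.2 1}

/-- The map `({}_{g₁}B) ×_B ({}_{g₂}Z) → {}_{g₂g₁}Z` sending `(β, γ)` to `(g₂ ∘ β) · γ`. -/
noncomputable def bcoFwd (g₁ : A → B) (g₂ : B → Z) (hg₂ : Continuous g₂)
    (w : BCOcomp g₁ g₂) : BCOl (g₂ ∘ g₁) :=
  ⟨(w.1.1.1.1,
      (((toPath w.1.1.1.2).map hg₂).trans
        ((toPath w.1.2.1.2).cast ((w.1.2.2.trans (congrArg g₂ w.2)).symm) rfl)).toContinuousMap),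
    ((((toPath w.1.1.1.2).map hg₂).trans _).source).trans (congrArg g₂ w.1.1.2)⟩

/-- The map `{}_{g₂g₁}Z → ({}_{g₁}B) ×_B ({}_{g₂}Z)` sending `δ` to `(c_{g₁ a}, δ)`. -/
def bcoBwd (g₁ : A → B) (g₂ : B → Z) (x : BCOl (g₂ ∘ g₁)) : BCOcomp g₁ g₂ :=
  ⟨(⟨(x.1.1, ContinuousMap.const unitInterval (g₁ x.1.1)), rfl⟩,
    ⟨(g₁ x.1.1, x.1.2), x.2⟩), rfl⟩

set_option linter.unusedSectionVars false

-- auxiliary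
noncomputable def pI : ℝ → unitInterval := Set.projIcc 0 1 zero_le_one

lemma pI_cont : Continuous pI := continuous_projIcc

@[simp] lemma pI_coe (s : unitInterval) : pI (s : ℝ) = s := Set.projIcc_val zero_le_one s

lemma pI_eq (r : ℝ) (x : unitInterval) (h : r = (x : ℝ)) : pI r = x := by rw [h, pI_coe]

example : LocallyCompactSpace unitInterval := inferInstance

/-- Uncurried second-component formula of the homotopy `H`. -/
noncomputable def HFun (g₁ : A → B) (g₂ : B → Z)
    (q : BCOcomp g₁ g₂ × unitInterval × unitInterval) : Z :=
  if (q.2.2 : ℝ) ≤ (1 - (q.2.1 : ℝ)) / 2 then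
    g₂ (q.1.1.1.1.2 (pI ((q.2.1 : ℝ) + 2 * (q.2.2 : ℝ))))
  else q.1.1.2.1.2 (pI ((2 * (q.2.2 : ℝ) - 1 + (q.2.1 : ℝ)) / (1 + (q.2.1 : ℝ))))

lemma HFun_cont (g₁ : A → B) (g₂ : B → Z) (hg₂ : Continuous g₂) :
    Continuous (HFun g₁ g₂) := by
  have h1 : Continuous fun q : BCOcomp g₁ g₂ × unitInterval × unitInterval =>
      g₂ (q.1.1.1.1.2 (pI ((q.2.1 : ℝ) + 2 * (q.2.2 : ℝ)))) := by
    apply hg₂.comp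
    have hF : Continuous fun q : BCOcomp g₁ g₂ × unitInterval × unitInterval =>
        (q.1.1.1.1.2, pI ((q.2.1 : ℝ) + 2 * (q.2.2 : ℝ))) :=
      Continuous.prodMk (by fun_prop) (pI_cont.comp (by fun_prop))
    exact ContinuousEval.continuous_eval.comp hF
  have h2 : Continuous fun q : BCOcomp g₁ g₂ × unitInterval × unitInterval =>
      q.1.1.2.1.2 (pI ((2 * (q.2.2 : ℝ) - 1 + (q.2.1 : ℝ)) / (1 + (q.2.1 : ℝ)))) := by
    have hF : Continuous fun q : BCOcomp g₁ g₂ × unitInterval × unitInterval =>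
        (q.1.1.2.1.2, pI ((2 * (q.2.2 : ℝ) - 1 + (q.2.1 : ℝ)) / (1 + (q.2.1 : ℝ)))) := by
      apply Continuous.prodMk (by fun_prop)
      apply pI_cont.comp
      apply Continuous.div (by fun_prop) (by fun_prop)
      intro q
      have := q.2.1.2.1
      intro h; linarith
    exact ContinuousEval.continuous_eval.comp hF
  apply Continuous.if_le h1 h2 (by fun_prop) (by fun_prop)
  intro q h
  have ht1 : (q.2.1 : ℝ) + 2 * (q.2.2 : ℝ) = 1 := by rw [h]; ring
  have ht0 : (2 * (q.2.2 : ℝ) - 1 + (q.2.1 : ℝ)) / (1 + (q.2.1 : ℝ)) = 0 := by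
    rw [h]; ring_nf
  rw [ht1, ht0, pI_eq 1 1 (by norm_num), pI_eq 0 0 (by norm_num)]
  rw [q.1.1.2.2, q.1.2]

@[simp] lemma uI_coe_zero : ((0 : unitInterval) : ℝ) = 0 := rfl
@[simp] lemma uI_coe_one : ((1 : unitInterval) : ℝ) = 1 := rfl

/-- Uncurried first-component formula of the homotopy `H`. -/
noncomputable def HFst (g₁ : A → B) (g₂ : B → Z)
    (q : BCOcomp g₁ g₂ × unitInterval × unitInterval) : B :=
  q.1.1.1.1.2 (pI ((q.2.1 : ℝ) * (q.2.2 : ℝ)))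

lemma HFst_cont (g₁ : A → B) (g₂ : B → Z) : Continuous (HFst g₁ g₂) := by
  have hF : Continuous fun q : BCOcomp g₁ g₂ × unitInterval × unitInterval =>
      (q.1.1.1.1.2, pI ((q.2.1 : ℝ) * (q.2.2 : ℝ))) :=
    Continuous.prodMk (by fun_prop) (pI_cont.comp (by fun_prop))
  exact ContinuousEval.continuous_eval.comp hF

/-- The homotopy `H` on the composite base change object. -/
noncomputable def Hmap (g₁ : A → B) (g₂ : B → Z) (hg₂ : Continuous g₂)
    (p : BCOcomp g₁ g₂ × unitInterval) : BCOcomp g₁ g₂ :=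
  ⟨(⟨(p.1.1.1.1.1, ⟨fun s => HFst g₁ g₂ (p.1, p.2, s),
        (HFst_cont g₁ g₂).comp (by fun_prop)⟩), by
      show HFst g₁ g₂ (p.1, p.2, 0) = _
      unfold HFst
      rw [pI_eq _ 0 (by norm_num)]
      exact p.1.1.1.2⟩,
    ⟨(HFst g₁ g₂ (p.1, p.2, 1), ⟨fun s => HFun g₁ g₂ (p.1, p.2, s),
        (HFun_cont g₁ g₂ hg₂).comp (by fun_prop)⟩), by
      show HFun g₁ g₂ (p.1, p.2, 0) = _
      unfold HFun HFst
      rw [if_pos (by simp only [uI_coe_zero]; have := p.2.2.2; linarith)]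
      have e : (p.2 : ℝ) + 2 * ((0 : unitInterval) : ℝ)
          = (p.2 : ℝ) * ((1 : unitInterval) : ℝ) := by norm_num
      rw [e]⟩),
    rfl⟩

lemma Hmap_cont (g₁ : A → B) (g₂ : B → Z) (hg₂ : Continuous g₂) :
    Continuous (Hmap g₁ g₂ hg₂) := by
  apply Continuous.subtype_mk
  apply Continuous.prodMk
  · apply Continuous.subtype_mk
    apply Continuous.prodMk
    · fun_prop
    · apply ContinuousMap.continuous_of_continuous_uncurry
      exact (HFst_cont g₁ g₂).comp (by fun_prop)
  · apply Continuous.subtype_mk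
    apply Continuous.prodMk
    · exact (HFst_cont g₁ g₂).comp (by fun_prop)
    · apply ContinuousMap.continuous_of_continuous_uncurry
      exact (HFun_cont g₁ g₂ hg₂).comp (by fun_prop)

@[simp] lemma toPath_coe {B : Type u} [TopologicalSpace B] (f : C(unitInterval, B)) :
    ⇑(toPath f) = ⇑f := rfl

lemma HFun_zero (g₁ : A → B) (g₂ : B → Z) (hg₂ : Continuous g₂) (w : BCOcomp g₁ g₂)
    (s : unitInterval) : HFun g₁ g₂ (w, 0, s) = (bcoFwd g₁ g₂ hg₂ w).1.2 s := by
  show _ = ((((toPath w.1.1.1.2).map hg₂).trans _).toContinuousMap) s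
  rw [Path.coe_toContinuousMap, Path.trans_apply]
  unfold HFun
  split_ifs with h h' h'
  · simp only [Path.map_coe, toPath_coe, Function.comp_apply]
    congr 2
    apply pI_eq
    simp
  · exfalso; revert h'; simp only [uI_coe_zero] at h ⊢; intro h'; exact h' (by linarith)
  · exfalso; revert h'; simp only [uI_coe_zero] at h ⊢; intro h'; exact h (by linarith)
  · simp only [Path.cast_coe, toPath_coe]
    congr 1
    apply pI_eq
    simp

lemma HFst_zero (g₁ : A → B) (g₂ : B → Z) (w : BCOcomp g₁ g₂) (s : unitInterval) :
    HFst g₁ g₂ (w, 0, s) = g₁ w.1.1.1.1 := by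
  unfold HFst
  rw [pI_eq _ 0 (by norm_num)]
  exact w.1.1.2

lemma HFst_one (g₁ : A → B) (g₂ : B → Z) (w : BCOcomp g₁ g₂) (s : unitInterval) :
    HFst g₁ g₂ (w, 1, s) = w.1.1.1.2 s := by
  unfold HFst
  rw [pI_eq _ s (by norm_num)]

lemma HFun_one (g₁ : A → B) (g₂ : B → Z) (w : BCOcomp g₁ g₂) (s : unitInterval) :
    HFun g₁ g₂ (w, 1, s) = w.1.2.1.2 s := by
  unfold HFun
  split_ifs with h
  · simp only [uI_coe_one] at h
    have hs : (s : ℝ) = 0 := le_antisymm (by linarith) s.2.1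
    rw [pI_eq _ 1 (by rw [hs]; norm_num)]
    rw [show s = 0 from Subtype.ext hs]
    rw [w.1.2.2, w.2]
  · congr 1
    apply pI_eq
    simp only [uI_coe_one]
    ring

lemma HFun_last (g₁ : A → B) (g₂ : B → Z) (w : BCOcomp g₁ g₂) (t : unitInterval) :
    HFun g₁ g₂ (w, t, 1) = w.1.2.1.2 1 := by
  unfold HFun
  rw [if_neg (by simp only [uI_coe_one]; have := t.2.1; intro h; linarith)]
  congr 1
  apply pI_eq
  have h1 : (1 : ℝ) + (t : ℝ) ≠ 0 := by have := t.2.1; intro h; linarith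
  field_simp
  simp only [uI_coe_one]
  ring

lemma BCOcomp_ext {g₁ : A → B} {g₂ : B → Z} {u v : BCOcomp g₁ g₂}
    (h1 : u.1.1.1 = v.1.1.1) (h2 : u.1.2.1 = v.1.2.1) : u = v := by
  apply Subtype.ext
  apply Prod.ext <;> apply Subtype.ext <;> assumption

lemma Hmap_zero (g₁ : A → B) (g₂ : B → Z) (hg₂ : Continuous g₂) (w : BCOcomp g₁ g₂) :
    Hmap g₁ g₂ hg₂ (w, 0) = bcoBwd g₁ g₂ (bcoFwd g₁ g₂ hg₂ w) := by
  apply BCOcomp_ext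
  · apply Prod.ext
    · rfl
    · ext s
      exact HFst_zero g₁ g₂ w s
  · apply Prod.ext
    · exact HFst_zero g₁ g₂ w 1
    · ext s
      exact HFun_zero g₁ g₂ hg₂ w s

lemma Hmap_one (g₁ : A → B) (g₂ : B → Z) (hg₂ : Continuous g₂) (w : BCOcomp g₁ g₂) :
    Hmap g₁ g₂ hg₂ (w, 1) = w := by
  apply BCOcomp_ext
  · apply Prod.ext
    · rfl
    · ext s
      exact HFst_one g₁ g₂ w s
  · apply Prod.ext
    · exact (HFst_one g₁ g₂ w 1).trans w.2.symm
    · ext s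
      exact HFun_one g₁ g₂ w s

/-- Uncurried formula of the homotopy `K`. -/
noncomputable def KFun (g₁ : A → B) (g₂ : B → Z)
    (q : BCOl (g₂ ∘ g₁) × unitInterval × unitInterval) : Z :=
  if (q.2.2 : ℝ) ≤ (1 - (q.2.1 : ℝ)) / 2 then q.1.1.2 0
  else q.1.1.2 (pI ((2 * (q.2.2 : ℝ) - 1 + (q.2.1 : ℝ)) / (1 + (q.2.1 : ℝ))))

lemma KFun_cont (g₁ : A → B) (g₂ : B → Z) : Continuous (KFun g₁ g₂) := by
  have h1 : Continuous fun q : BCOl (g₂ ∘ g₁) × unitInterval × unitInterval =>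
      q.1.1.2 0 := by
    have hF : Continuous fun q : BCOl (g₂ ∘ g₁) × unitInterval × unitInterval =>
        (q.1.1.2, (0 : unitInterval)) := Continuous.prodMk (by fun_prop) continuous_const
    exact ContinuousEval.continuous_eval.comp hF
  have h2 : Continuous fun q : BCOl (g₂ ∘ g₁) × unitInterval × unitInterval =>
      q.1.1.2 (pI ((2 * (q.2.2 : ℝ) - 1 + (q.2.1 : ℝ)) / (1 + (q.2.1 : ℝ)))) := by
    have hF : Continuous fun q : BCOl (g₂ ∘ g₁) × unitInterval × unitInterval =>
        (q.1.1.2, pI ((2 * (q.2.2 : ℝ) - 1 + (q.2.1 : ℝ)) / (1 + (q.2.1 : ℝ)))) := by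
      apply Continuous.prodMk (by fun_prop)
      apply pI_cont.comp
      apply Continuous.div (by fun_prop) (by fun_prop)
      intro q
      have := q.2.1.2.1
      intro h; linarith
    exact ContinuousEval.continuous_eval.comp hF
  apply Continuous.if_le h1 h2 (by fun_prop) (by fun_prop)
  intro q h
  have ht0 : (2 * (q.2.2 : ℝ) - 1 + (q.2.1 : ℝ)) / (1 + (q.2.1 : ℝ)) = 0 := by
    rw [h]; ring_nf
  rw [ht0, pI_eq 0 0 (by norm_num)]

/-- The homotopy `K` on the target base change object. -/
noncomputable def Kmap (g₁ : A → B) (g₂ : B → Z)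
    (p : BCOl (g₂ ∘ g₁) × unitInterval) : BCOl (g₂ ∘ g₁) :=
  ⟨(p.1.1.1, ⟨fun s => KFun g₁ g₂ (p.1, p.2, s),
      (KFun_cont g₁ g₂).comp (by fun_prop)⟩), by
    show KFun g₁ g₂ (p.1, p.2, 0) = _
    unfold KFun
    rw [if_pos (by simp only [uI_coe_zero]; have := p.2.2.2; linarith)]
    exact p.1.2⟩

lemma Kmap_cont (g₁ : A → B) (g₂ : B → Z) : Continuous (Kmap g₁ g₂) := by
  apply Continuous.subtype_mk
  apply Continuous.prodMk
  · fun_prop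
  · apply ContinuousMap.continuous_of_continuous_uncurry
    exact (KFun_cont g₁ g₂).comp (by fun_prop)

lemma KFun_zero (g₁ : A → B) (g₂ : B → Z) (hg₂ : Continuous g₂) (x : BCOl (g₂ ∘ g₁))
    (s : unitInterval) :
    KFun g₁ g₂ (x, 0, s) = (bcoFwd g₁ g₂ hg₂ (bcoBwd g₁ g₂ x)).1.2 s := by
  show _ = (Path.trans _ _).toContinuousMap s
  rw [Path.coe_toContinuousMap, Path.trans_apply]
  unfold KFun
  split_ifs with h h' h'
  · simp only [Path.map_coe, toPath_coe, Function.comp_apply, ContinuousMap.const_apply]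
    exact x.2
  · exfalso; revert h'; simp only [uI_coe_zero] at h ⊢; intro h'; exact h' (by linarith)
  · exfalso; revert h'; simp only [uI_coe_zero] at h ⊢; intro h'; exact h (by linarith)
  · simp only [Path.cast_coe, toPath_coe]
    congr 1
    apply pI_eq
    simp

lemma KFun_one (g₁ : A → B) (g₂ : B → Z) (x : BCOl (g₂ ∘ g₁)) (s : unitInterval) :
    KFun g₁ g₂ (x, 1, s) = x.1.2 s := by
  unfold KFun
  split_ifs with h
  · simp only [uI_coe_one] at h
    have hs : (s : ℝ) = 0 := le_antisymm (by linarith) s.2.1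
    rw [show s = 0 from Subtype.ext hs]
  · congr 1
    apply pI_eq
    simp only [uI_coe_one]
    ring

lemma KFun_last (g₁ : A → B) (g₂ : B → Z) (x : BCOl (g₂ ∘ g₁)) (t : unitInterval) :
    KFun g₁ g₂ (x, t, 1) = x.1.2 1 := by
  unfold KFun
  rw [if_neg (by simp only [uI_coe_one]; have := t.2.1; intro h; linarith)]
  congr 1
  apply pI_eq
  have h1 : (1 : ℝ) + (t : ℝ) ≠ 0 := by have := t.2.1; intro h; linarith
  field_simp
  simp only [uI_coe_one]
  ring

lemma Kmap_zero (g₁ : A → B) (g₂ : B → Z) (hg₂ : Continuous g₂) (x : BCOl (g₂ ∘ g₁)) :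
    Kmap g₁ g₂ (x, 0) = bcoFwd g₁ g₂ hg₂ (bcoBwd g₁ g₂ x) := by
  apply Subtype.ext
  apply Prod.ext
  · rfl
  · ext s
    exact KFun_zero g₁ g₂ hg₂ x s

lemma Kmap_one (g₁ : A → B) (g₂ : B → Z) (x : BCOl (g₂ ∘ g₁)) :
    Kmap g₁ g₂ (x, 1) = x := by
  apply Subtype.ext
  apply Prod.ext
  · rfl
  · ext s
    exact KFun_one g₁ g₂ x s

/-- Pseudofunctoriality of base change objects: the maps `(β, γ) ↦ (g₂ ∘ β) · γ` and
`δ ↦ (c_{g₁ a}, δ)` are inverse fiberwise homotopy equivalences over `A × Z` between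
`({}_{g₁}B) ×_B ({}_{g₂}Z)` and `{}_{g₂g₁}Z`. -/
theorem base_change_pseudofunctorial (g₁ : A → B) (g₂ : B → Z)
    (hg₁ : Continuous g₁) (hg₂ : Continuous g₂) :
    Continuous (bcoFwd g₁ g₂ hg₂) ∧ Continuous (bcoBwd g₁ g₂) ∧
    (∀ w : BCOcomp g₁ g₂,
      ((bcoFwd g₁ g₂ hg₂ w).1.1, (bcoFwd g₁ g₂ hg₂ w).1.2 1) = (w.1.1.1.1, w.1.2.1.2 1)) ∧
    (∀ x : BCOl (g₂ ∘ g₁),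
      ((bcoBwd g₁ g₂ x).1.1.1.1, (bcoBwd g₁ g₂ x).1.2.1.2 1) = (x.1.1, x.1.2 1)) ∧
    (∃ H : BCOcomp g₁ g₂ × unitInterval → BCOcomp g₁ g₂, Continuous H ∧
      (∀ w, H (w, 0) = bcoBwd g₁ g₂ (bcoFwd g₁ g₂ hg₂ w)) ∧ (∀ w, H (w, 1) = w) ∧
      ∀ w t, ((H (w, t)).1.1.1.1, (H (w, t)).1.2.1.2 1) = (w.1.1.1.1, w.1.2.1.2 1)) ∧
    (∃ K : BCOl (g₂ ∘ g₁) × unitInterval → BCOl (g₂ ∘ g₁), Continuous K ∧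
      (∀ x, K (x, 0) = bcoFwd g₁ g₂ hg₂ (bcoBwd g₁ g₂ x)) ∧ (∀ x, K (x, 1) = x) ∧
      ∀ x t, ((K (x, t)).1.1, (K (x, t)).1.2 1) = (x.1.1, x.1.2 1)) := by
  refine ⟨?_, ?_, ?_, ?_, ?_, ?_⟩
  · unfold bcoFwd
    apply Continuous.subtype_mk
    apply Continuous.prodMk
    · fun_prop
    · apply ContinuousMap.continuous_of_continuous_uncurry
      have hc : Continuous fun q : BCOcomp g₁ g₂ × unitInterval =>
          HFun g₁ g₂ (q.1, 0, q.2) := (HFun_cont g₁ g₂ hg₂).comp (by fun_prop)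
      exact hc.congr fun q => HFun_zero g₁ g₂ hg₂ q.1 q.2
  · unfold bcoBwd
    apply Continuous.subtype_mk
    apply Continuous.prodMk <;> apply Continuous.subtype_mk
    · apply Continuous.prodMk
      · fun_prop
      · exact ContinuousMap.continuous_const'.comp (hg₁.comp (by fun_prop))
    · apply Continuous.prodMk
      · exact hg₁.comp (by fun_prop)
      · fun_prop
  · intro w
    exact Prod.ext rfl ((HFun_zero g₁ g₂ hg₂ w 1).symm.trans (HFun_last g₁ g₂ w 0))
  · intro x
    rfl
  · exact ⟨Hmap g₁ g₂ hg₂, Hmap_cont g₁ g₂ hg₂, Hmap_zero g₁ g₂ hg₂, Hmap_one g₁ g₂ hg₂,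
      fun w t => Prod.ext rfl (HFun_last g₁ g₂ w t)⟩
  · exact ⟨Kmap g₁ g₂, Kmap_cont g₁ g₂, Kmap_zero g₁ g₂ hg₂, Kmap_one g₁ g₂,
      fun x t => Prod.ext rfl (KFun_last g₁ g₂ x t)⟩
end

section
/- Let g : B → B be continuous and let Λ^g B denote the twisted free loop space, i.e. the space of pairs (b, γ) with γ a path from b to g(b), topologized as a subspace of B × C([0,1], B). Then π₀(Λ^g B) is in natural bijection with the set of Reidemeister classes: pairs (b, γ : b ⇝ g(b)) modulo (b,γ) ∼ (b',γ') iff there is a path α : b ⇝ b' with α · γ' path-homotopic to γ · (g ∘ α) rel endpoints. -/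
open scoped unitInterval

namespace TwistedLoopAux

variable {B : Type*} [TopologicalSpace B] {g : B → B}

abbrev Lam (g : B → B) : Type _ := {x : B × C(I, B) // x.2 0 = x.1 ∧ x.2 1 = g x.1}

def mk' (b : B) (p : Path b (g b)) : Lam g :=
  ⟨(b, p.toContinuousMap), p.source, p.target⟩

def pathOf (x : Lam g) : Path x.1.1 (g x.1.1) := ⟨x.1.2, x.2.1, x.2.2⟩

theorem trans_eqOn {X : Type*} [TopologicalSpace X] {a b c a' b' c' : X} {p : Path a b}
    {q : Path b c} {p' : Path a' b'} {q' : Path b' c'} (hp : ∀ s, p s = p' s)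
    (hq : ∀ s, q s = q' s) (s : I) : (p.trans q) s = (p'.trans q') s := by
  rw [Path.trans_apply, Path.trans_apply]; split_ifs <;> [exact hp _; exact hq _]

theorem homotopic_transfer {X : Type*} [TopologicalSpace X] {a b a' b' : X} (ha : a = a')
    (hb : b = b') {p q : Path a b} {p' q' : Path a' b'} (hp : ∀ s, p s = p' s)
    (hq : ∀ s, q s = q' s) (h : p.Homotopic q) : p'.Homotopic q' := by
  subst ha; subst hb
  have hp' : p = p' := Path.ext (funext hp)
  have hq' : q = q' := Path.ext (funext hq)
  rwa [hp', hq'] at h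

theorem joined_of_homotopy {b b' : B} (p : Path b (g b)) (q : Path b' (g b'))
    (K : C(I, C(I, B))) (h0 : K 0 = p.toContinuousMap) (h1 : K 1 = q.toContinuousMap)
    (hm : ∀ t, K t 1 = g (K t 0)) : Joined (mk' b p) (mk' b' q) := by
  refine ⟨⟨⟨fun t => ⟨(K t 0, K t), rfl, hm t⟩, ?_⟩, ?_, ?_⟩⟩
  · exact Continuous.subtype_mk
      ((ContinuousEval.continuous_eval.comp (K.continuous.prodMk continuous_const)).prodMk
        K.continuous) _
  · apply Subtype.ext
    show (K 0 0, K 0) = (b, p.toContinuousMap)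
    rw [h0, show p.toContinuousMap 0 = b from p.source]
  · apply Subtype.ext
    show (K 1 0, K 1) = (b', q.toContinuousMap)
    rw [h1, show q.toContinuousMap 0 = b' from q.source]

theorem joined_of_homotopic {b : B} {p q : Path b (g b)} (h : p.Homotopic q) :
    Joined (mk' b p) (mk' b q) := by
  obtain ⟨H⟩ := h
  refine joined_of_homotopy p q (ContinuousMap.curry H.toContinuousMap) ?_ ?_ ?_
  · exact ContinuousMap.ext fun s => H.apply_zero s
  · exact ContinuousMap.ext fun s => H.apply_one s
  · intro t
    have e1 : (ContinuousMap.curry H.toContinuousMap) t 1 = g b := H.target t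
    have e0 : (ContinuousMap.curry H.toContinuousMap) t 0 = b := H.source t
    rw [e0, e1]

theorem rel_imp_joined (hg : Continuous g) {x y : Σ b : B, Path b (g b)}
    (h : ∃ α : Path x.1 y.1, (α.trans y.2).Homotopic (x.2.trans (α.map hg))) :
    Joined (mk' x.1 x.2) (mk' y.1 y.2) := by
  obtain ⟨b, γ⟩ := x
  obtain ⟨b', γ'⟩ := y
  obtain ⟨α, hα⟩ := h
  dsimp only at α hα ⊢
  -- the truncation family
  have hmin : ∀ t : I, b = α.extend (min 0 ↑t) := fun t => by
    rw [min_eq_left t.2.1, α.extend_zero]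
  set A : ∀ t : I, Path b (α t) :=
    fun t => (α.truncate 0 ↑t).cast (hmin t) (α.extend_extends' t).symm with hA_def
  have hA : Continuous ↿A := by
    have h1 : Continuous (fun p : I × I => α.truncate 0 (↑p.1) p.2) :=
      α.truncate_continuous_family.comp
        (continuous_const.prodMk
          ((continuous_subtype_val.comp continuous_fst).prodMk continuous_snd))
    exact h1
  have hA0 : ∀ s : I, A 0 s = b := fun s => by
    show α.extend (min (max (↑s) 0) (0 : ℝ)) = b
    rw [max_eq_left s.2.1, min_eq_right s.2.1, α.extend_zero]
  have hA1 : ∀ s : I, A 1 s = α s := fun s => by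
    show α.extend (min (max (↑s) 0) (1 : ℝ)) = α s
    rw [max_eq_left s.2.1, min_eq_left s.2.2, α.extend_extends']
  set δ : ∀ t : I, Path (α t) (g (α t)) :=
    fun t => (A t).symm.trans (γ.trans ((A t).map hg)) with hδ_def
  have hδc : Continuous ↿δ := by
    refine Path.trans_continuous_family _ (Path.symm_continuous_family A hA) _ ?_
    refine Path.trans_continuous_family (fun _ => γ) (γ.continuous.comp continuous_snd)
      (fun t => (A t).map hg) ?_
    exact hg.comp hA
  set K : C(I, C(I, B)) := ContinuousMap.curry ⟨↿δ, hδc⟩ with hK_def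
  set ρ0 : Path b (g b) := (δ 0).cast α.source.symm (congrArg g α.source).symm with hρ0_def
  set ρ1 : Path b' (g b') := (δ 1).cast α.target.symm (congrArg g α.target).symm with hρ1_def
  have j1 : Joined (mk' b γ) (mk' (g := g) b ρ0) := by
    apply joined_of_homotopic
    have hq0 : ρ0 = (Path.refl b).trans (γ.trans (Path.refl (g b))) := by
      apply Path.ext; funext s
      show (δ 0) s = _
      exact trans_eqOn (fun s => by show A 0 (unitInterval.symm s) = b; exact hA0 _)
        (trans_eqOn (fun _ => rfl) (fun s => by show g (A 0 s) = g b; rw [hA0])) s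
    have e1 : ((Path.refl b).trans (γ.trans (Path.refl (g b)))).Homotopic
        (γ.trans (Path.refl (g b))) := ⟨Path.Homotopy.reflTrans _⟩
    have e2 : (γ.trans (Path.refl (g b))).Homotopic γ := ⟨Path.Homotopy.transRefl γ⟩
    rw [hq0]
    exact (e1.trans e2).symm
  have j2 : Joined (mk' (g := g) b ρ0) (mk' (g := g) b' ρ1) := by
    refine joined_of_homotopy ρ0 ρ1 K ?_ ?_ ?_
    · exact ContinuousMap.ext fun s => rfl
    · exact ContinuousMap.ext fun s => rfl
    · intro t
      show (δ t) 1 = g ((δ t) 0)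
      rw [(δ t).source, (δ t).target]
  have j3 : Joined (mk' (g := g) b' ρ1) (mk' b' γ') := by
    apply joined_of_homotopic
    have hq1 : ρ1 = α.symm.trans (γ.trans (α.map hg)) := by
      apply Path.ext; funext s
      show (δ 1) s = _
      exact trans_eqOn
        (fun s => by show A 1 (unitInterval.symm s) = α (unitInterval.symm s); exact hA1 _)
        (trans_eqOn (fun _ => rfl) (fun s => by show g (A 1 s) = g (α s); rw [hA1])) s
    have h1' : (α.symm.trans (γ.trans (α.map hg))).Homotopic (α.symm.trans (α.trans γ')) :=
      Path.Homotopic.hcomp (Path.Homotopic.refl _) hα.symm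
    have h2' : (α.symm.trans (α.trans γ')).Homotopic ((α.symm.trans α).trans γ') :=
      Path.Homotopic.symm ⟨Path.Homotopy.transAssoc α.symm α γ'⟩
    have h3' : ((α.symm.trans α).trans γ').Homotopic ((Path.refl b').trans γ') :=
      Path.Homotopic.hcomp
        (Path.Homotopic.symm ⟨Path.Homotopy.reflSymmTrans α⟩) (Path.Homotopic.refl _)
    have h4' : ((Path.refl b').trans γ').Homotopic γ' := ⟨Path.Homotopy.reflTrans γ'⟩
    rw [hq1]
    exact ((h1'.trans h2').trans h3').trans h4'
  exact (j1.trans j2).trans j3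

theorem joined_imp_rel (hg : Continuous g) {x y : Lam g} (h : Joined x y) :
    ∃ α : Path x.1.1 y.1.1,
      (α.trans (pathOf y)).Homotopic ((pathOf x).trans (α.map hg)) := by
  obtain ⟨c⟩ := h
  have hf1 : Continuous fun p : I × I => (c p.1).1.2 :=
    continuous_snd.comp (continuous_subtype_val.comp (c.continuous.comp continuous_fst))
  set fc : C(I × I, B) := ⟨fun p => ((c p.1).1.2) p.2,
    ContinuousEval.continuous_eval.comp (hf1.prodMk continuous_snd)⟩ with hfc_def
  set α : Path x.1.1 y.1.1 := c.map (continuous_fst.comp continuous_subtype_val) with hα_def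
  refine ⟨α, ?_⟩
  set p01 := unitInterval.path01 with hp01
  have hsq : Path.Homotopic ((p01.trans (Path.refl 1)).prod ((Path.refl 0).trans p01))
      (((Path.refl 0).trans p01).prod (p01.trans (Path.refl 1))) := by
    have F : (p01.trans (Path.refl 1)).Homotopy ((Path.refl (0:I)).trans p01) :=
      (Path.Homotopy.transRefl p01).trans (Path.Homotopy.reflTrans p01).symm
    exact ⟨Path.Homotopic.prodHomotopy F F.symm⟩
  have him := hsq.map fc
  have ha : fc ((0:I), (0:I)) = x.1.1 := by
    show (c 0).1.2 0 = x.1.1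
    rw [c.source]; exact x.2.1
  have hb : fc ((1:I), (1:I)) = g y.1.1 := by
    show (c 1).1.2 1 = g y.1.1
    rw [c.target]; exact y.2.2
  refine homotopic_transfer ha hb ?_ ?_ him
  · intro s
    show fc ((p01.trans (Path.refl 1)) s, ((Path.refl 0).trans p01) s) = (α.trans (pathOf y)) s
    rw [Path.trans_apply, Path.trans_apply, Path.trans_apply]
    split_ifs with hs
    · exact (c _).2.1
    · show (c ((Path.refl (1:I)) _)).1.2 (p01 _) = (pathOf y) _
      simp only [Path.refl_apply]
      rw [c.target]
      rfl
  · intro s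
    show fc (((Path.refl 0).trans p01) s, (p01.trans (Path.refl 1)) s)
        = ((pathOf x).trans (α.map hg)) s
    rw [Path.trans_apply, Path.trans_apply, Path.trans_apply]
    split_ifs with hs
    · show (c ((Path.refl (0:I)) _)).1.2 (p01 _) = (pathOf x) _
      simp only [Path.refl_apply]
      rw [c.source]
      rfl
    · show (c (p01 _)).1.2 ((Path.refl (1:I)) _) = g (α _)
      simp only [Path.refl_apply]
      exact (c _).2.2


end TwistedLoopAux

/-- The set of path components of the twisted free loop space `Λ^g B` (pairs `(b, γ)`
with `γ` a path from `b` to `g b`, topologized as a subspace of `B × C([0,1], B)`)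
is in natural bijection with the set of Reidemeister classes: pairs `(b, γ : b ⇝ g b)`
modulo `(b,γ) ∼ (b',γ')` iff there is `α : b ⇝ b'` with `α · γ'` path-homotopic to
`γ · (g ∘ α)` rel endpoints. -/
theorem pi0_twisted_loop_space_equiv_reidemeister {B : Type*} [TopologicalSpace B]
    (g : B → B) (hg : Continuous g) :
    ∃ F : ZerothHomotopy {x : B × C(unitInterval, B) // x.2 0 = x.1 ∧ x.2 1 = g x.1} →
        Quot (fun x y : Σ b : B, Path b (g b) =>
          ∃ α : Path x.1 y.1, (α.trans y.2).Homotopic (x.2.trans (α.map hg))),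
      Function.Bijective F ∧
        ∀ x, F (Quotient.mk (pathSetoid _) x) =
          Quot.mk _ ⟨x.1.1,
            (⟨x.1.2, rfl, rfl⟩ : Path (x.1.2 0) (x.1.2 1)).cast x.2.1.symm x.2.2.symm⟩ := by
  classical
  set R : (Σ b : B, Path b (g b)) → (Σ b : B, Path b (g b)) → Prop := fun x y =>
    ∃ α : Path x.1 y.1, (α.trans y.2).Homotopic (x.2.trans (α.map hg)) with hR
  refine ⟨Quotient.lift
      (fun x : TwistedLoopAux.Lam g => Quot.mk R ⟨x.1.1, TwistedLoopAux.pathOf x⟩)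
      (fun x y h => Quot.sound (TwistedLoopAux.joined_imp_rel hg h)), ⟨?_, ?_⟩, fun x => rfl⟩
  · -- injective
    intro a b
    refine Quotient.inductionOn₂ a b (fun x y h => ?_)
    have hgen : Relation.EqvGen R ⟨x.1.1, TwistedLoopAux.pathOf x⟩ ⟨y.1.1, TwistedLoopAux.pathOf y⟩ :=
      Quot.eq.mp h
    have key : ∀ u v : Σ b : B, Path b (g b), Relation.EqvGen R u v →
        Joined (TwistedLoopAux.mk' u.1 u.2) (TwistedLoopAux.mk' v.1 v.2) := by
      intro u v huv
      induction huv with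
      | rel u v hr => exact TwistedLoopAux.rel_imp_joined hg hr
      | refl u => exact Joined.refl _
      | symm u v _ ih => exact ih.symm
      | trans u v w _ _ ih1 ih2 => exact ih1.trans ih2
    have hj : Joined x y := key _ _ hgen
    exact Quotient.sound hj
  · -- surjective
    intro q
    obtain ⟨s, rfl⟩ := Quot.exists_rep q
    exact ⟨Quotient.mk (pathSetoid _) (TwistedLoopAux.mk' s.1 s.2), rfl⟩
end
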